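/- Let D ≥ 1 and N ≥ 3 be integers and define Fish[D,N,x] = E[(F_{D,N} - x)₊]/E[F_{D,N}] for x ≥ 0, where F_{D,N} is a Fisher random variable with D and N degrees of freedom. Then for all x ≥ 0, Fish(D,N,x) = P(F_{D+2,N-2} ≥ ((N-2)D x)/((D+2)N)) - x·((N-2)/N)·P(F_{D,N} ≥ x). -/

import Mathlib

open MeasureTheory ProbabilityTheory Real

lemma real_id (d n u v : ℝ) (hd : 0 < d) (hn : 2 < n) (hu : 0 < u) (hv : 0 < v) :
    ((1/2:ℝ) ^ (d/2) / Gamma (d/2) * u ^ (d/2 - 1) * exp (-(1/2 * u))) *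
      ((1/2:ℝ) ^ (n/2) / Gamma (n/2) * v ^ (n/2 - 1) * exp (-(1/2 * v))) * (u / v)
    = d / (n - 2) *
      (((1/2:ℝ) ^ ((d+2)/2) / Gamma ((d+2)/2) * u ^ ((d+2)/2 - 1) * exp (-(1/2 * u))) *
       ((1/2:ℝ) ^ ((n-2)/2) / Gamma ((n-2)/2) * v ^ ((n-2)/2 - 1) * exp (-(1/2 * v)))) := by
  have hd2 : (0:ℝ) < d/2 := by linarith
  have hn2 : (0:ℝ) < (n-2)/2 := by linarith
  have e1 : ((d+2)/2 : ℝ) = d/2 + 1 := by ring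
  have e2 : (n/2 : ℝ) = ((n-2)/2) + 1 := by ring
  rw [e1, e2, Real.Gamma_add_one hd2.ne', Real.Gamma_add_one hn2.ne']
  rw [rpow_add (by norm_num : (0:ℝ) < 1/2), rpow_add (by norm_num : (0:ℝ) < 1/2), rpow_one]
  have eu : u ^ (d/2 + 1 - 1) = u ^ (d/2 - 1) * u := by
    rw [show (d/2 + 1 - 1 : ℝ) = (d/2 - 1) + 1 by ring, rpow_add hu, rpow_one]
  have ev : v ^ ((n-2)/2 + 1 - 1) = v ^ ((n-2)/2 - 1) * v := by
    rw [show ((n-2)/2 + 1 - 1 : ℝ) = ((n-2)/2 - 1) + 1 by ring, rpow_add hv, rpow_one]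
  rw [eu, ev]
  have hG1 : Gamma (d/2) ≠ 0 := (Gamma_pos_of_pos hd2).ne'
  have hG2 : Gamma ((n-2)/2) ≠ 0 := (Gamma_pos_of_pos hn2).ne'
  have hn2' : (n - 2 : ℝ) ≠ 0 := by linarith
  field_simp

lemma density_id (d n : ℝ) (hd : 0 < d) (hn : 2 < n) (u v : ℝ) (hv : v ≠ 0) :
    gammaPDF (d/2) (1/2) u * gammaPDF (n/2) (1/2) v * ENNReal.ofReal (u / v)
    = ENNReal.ofReal (d / (n - 2)) *
      (gammaPDF ((d+2)/2) (1/2) u * gammaPDF ((n-2)/2) (1/2) v) := by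
  rcases lt_trichotomy v 0 with hv0 | hv0 | hv0
  · simp [gammaPDF_of_neg hv0]
  · exact absurd hv0 hv
  rcases lt_trichotomy u 0 with hu | hu | hu
  · simp [gammaPDF_of_neg hu]
  · subst hu
    have h2 : gammaPDF ((d+2)/2) (2⁻¹) 0 = 0 := by
      rw [show (2⁻¹:ℝ) = 1/2 by norm_num, gammaPDF_of_nonneg le_rfl,
        zero_rpow (by linarith : (0:ℝ) < (d+2)/2 - 1).ne']
      simp
    simp [h2]
  · rw [gammaPDF_of_nonneg hu.le, gammaPDF_of_nonneg hv0.le, gammaPDF_of_nonneg hu.le,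
      gammaPDF_of_nonneg hv0.le]
    rw [← ENNReal.ofReal_mul (by positivity), ← ENNReal.ofReal_mul (by positivity),
      ← ENNReal.ofReal_mul (by positivity),
      ← ENNReal.ofReal_mul (div_nonneg hd.le (by linarith : (0:ℝ) ≤ n - 2))]
    exact congrArg ENNReal.ofReal (real_id d n u v hd hn hu hv0)

lemma measurable_gammaPDF' (a r : ℝ) : Measurable (gammaPDF a r) :=
  (measurable_gammaPDFReal a r).ennreal_ofReal

lemma HL {Ω : Type*} [MeasureSpace Ω] [IsProbabilityMeasure (ℙ : Measure Ω)]
    (X Y : Ω → ℝ) (hX : Measurable X) (hY : Measurable Y)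
    (a₁ a₂ : ℝ) (ha₁ : 0 < a₁) (ha₂ : 0 < a₂)
    (hXlaw : Measure.map X ℙ = gammaMeasure a₁ (1/2))
    (hYlaw : Measure.map Y ℙ = gammaMeasure a₂ (1/2))
    (hXY : IndepFun X Y ℙ) (h : ℝ × ℝ → ENNReal) (hh : Measurable h) :
    ∫⁻ ω, h (X ω, Y ω) ∂ℙ
      = ∫⁻ p, gammaPDF a₁ (1/2) p.1 * (gammaPDF a₂ (1/2) p.2 * h p)
          ∂((volume : Measure ℝ).prod volume) := by
  have hmap : Measure.map (fun ω => (X ω, Y ω)) ℙ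
      = (Measure.map X ℙ).prod (Measure.map Y ℙ) :=
    (ProbabilityTheory.indepFun_iff_map_prod_eq_prod_map_map hX.aemeasurable
      hY.aemeasurable).mp hXY
  have hP2 : IsProbabilityMeasure (gammaMeasure a₂ (1/2)) :=
    isProbabilityMeasure_gammaMeasure ha₂ (by norm_num)
  rw [← lintegral_map hh (hX.prodMk hY), hmap, hXlaw, hYlaw]
  simp only [gammaMeasure]
  rw [lintegral_prod _ hh.aemeasurable]
  have inner : ∀ u : ℝ, ∫⁻ v, h (u, v) ∂(volume.withDensity (gammaPDF a₂ (1/2)))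
      = ∫⁻ v, gammaPDF a₂ (1/2) v * h (u, v) ∂volume := fun u =>
    lintegral_withDensity_eq_lintegral_mul volume (measurable_gammaPDF' a₂ (1/2))
      (hh.comp (measurable_prodMk_left))
  simp_rw [inner]
  have hmeas2 : Measurable (fun p : ℝ × ℝ => gammaPDF a₂ (1/2) p.2 * h p) :=
    ((measurable_gammaPDF' a₂ (1/2)).comp measurable_snd).mul hh
  rw [lintegral_withDensity_eq_lintegral_mul volume (measurable_gammaPDF' a₁ (1/2))
      (Measurable.lintegral_prod_right (f := fun u v => gammaPDF a₂ (1/2) v * h (u, v)) hmeas2)]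
  rw [lintegral_prod (fun p : ℝ × ℝ => gammaPDF a₁ (1/2) p.1 * (gammaPDF a₂ (1/2) p.2 * h p))
    (((measurable_gammaPDF' a₁ (1/2)).comp measurable_fst).mul hmeas2).aemeasurable]
  refine lintegral_congr fun u => ?_
  simp only [Pi.mul_apply]
  exact (lintegral_const_mul _ ((((measurable_gammaPDF' a₂ (1/2)).comp measurable_snd).mul
    hh).comp measurable_prodMk_left)).symm

lemma CORE {Ω : Type*} [MeasureSpace Ω] [IsProbabilityMeasure (ℙ : Measure Ω)]
    (d n : ℝ) (hd : 0 < d) (hn : 2 < n)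
    (X Y A B : Ω → ℝ)
    (hX : Measurable X) (hY : Measurable Y) (hA : Measurable A) (hB : Measurable B)
    (hXlaw : Measure.map X ℙ = gammaMeasure (d / 2) (1 / 2))
    (hYlaw : Measure.map Y ℙ = gammaMeasure (n / 2) (1 / 2))
    (hAlaw : Measure.map A ℙ = gammaMeasure ((d + 2) / 2) (1 / 2))
    (hBlaw : Measure.map B ℙ = gammaMeasure ((n - 2) / 2) (1 / 2))
    (hXY : IndepFun X Y ℙ) (hAB : IndepFun A B ℙ)
    (g : ℝ → ENNReal) (hg : Measurable g) :
    ∫⁻ ω, ENNReal.ofReal (X ω / Y ω) * g (X ω / Y ω) ∂ℙ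
      = ENNReal.ofReal (d / (n - 2)) * ∫⁻ ω, g (A ω / B ω) ∂ℙ := by
  have hratio : Measurable (fun p : ℝ × ℝ => p.1 / p.2) :=
    measurable_fst.div measurable_snd
  have hh₁ : Measurable (fun p : ℝ × ℝ =>
      ENNReal.ofReal (p.1 / p.2) * g (p.1 / p.2)) :=
    hratio.ennreal_ofReal.mul (hg.comp hratio)
  have hh₂ : Measurable (fun p : ℝ × ℝ => g (p.1 / p.2)) := hg.comp hratio
  have hae : ∀ᵐ p : ℝ × ℝ ∂((volume : Measure ℝ).prod volume), p.2 ≠ 0 := by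
    rw [Filter.eventually_iff, mem_ae_iff]
    have hset : {p : ℝ × ℝ | p.2 ≠ 0}ᶜ = (Set.univ : Set ℝ) ×ˢ ({0} : Set ℝ) := by
      ext p
      simp only [Set.mem_compl_iff, Set.mem_setOf_eq, not_not, Set.mem_prod, Set.mem_univ,
        Set.mem_singleton_iff, true_and]
    rw [hset, Measure.prod_prod]
    simp
  calc ∫⁻ ω, ENNReal.ofReal (X ω / Y ω) * g (X ω / Y ω) ∂ℙ
      = ∫⁻ p, gammaPDF (d/2) (1/2) p.1 * (gammaPDF (n/2) (1/2) p.2 *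
          (ENNReal.ofReal (p.1 / p.2) * g (p.1 / p.2))) ∂((volume : Measure ℝ).prod volume) :=
        HL X Y hX hY _ _ (by linarith) (by linarith) hXlaw hYlaw hXY _ hh₁
    _ = ∫⁻ p, ENNReal.ofReal (d / (n - 2)) * (gammaPDF ((d+2)/2) (1/2) p.1 *
          (gammaPDF ((n-2)/2) (1/2) p.2 * g (p.1 / p.2))) ∂((volume : Measure ℝ).prod volume) := by
        refine lintegral_congr_ae ?_
        filter_upwards [hae] with p hp
        have hkey := density_id d n hd hn p.1 p.2 hp
        calc gammaPDF (d/2) (1/2) p.1 * (gammaPDF (n/2) (1/2) p.2 *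
              (ENNReal.ofReal (p.1 / p.2) * g (p.1 / p.2)))
            = (gammaPDF (d/2) (1/2) p.1 * gammaPDF (n/2) (1/2) p.2 *
                ENNReal.ofReal (p.1 / p.2)) * g (p.1 / p.2) := by ring
          _ = (ENNReal.ofReal (d / (n - 2)) * (gammaPDF ((d+2)/2) (1/2) p.1 *
                gammaPDF ((n-2)/2) (1/2) p.2)) * g (p.1 / p.2) := by rw [hkey]
          _ = ENNReal.ofReal (d / (n - 2)) * (gammaPDF ((d+2)/2) (1/2) p.1 *
                (gammaPDF ((n-2)/2) (1/2) p.2 * g (p.1 / p.2))) := by ring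
    _ = ENNReal.ofReal (d / (n - 2)) * ∫⁻ p, gammaPDF ((d+2)/2) (1/2) p.1 *
          (gammaPDF ((n-2)/2) (1/2) p.2 * g (p.1 / p.2)) ∂((volume : Measure ℝ).prod volume) :=
        lintegral_const_mul _ (((measurable_gammaPDF' _ _).comp measurable_fst).mul
          (((measurable_gammaPDF' _ _).comp measurable_snd).mul hh₂))
    _ = ENNReal.ofReal (d / (n - 2)) * ∫⁻ ω, g (A ω / B ω) ∂ℙ := by
        rw [← HL A B hA hB _ _ (by linarith) (by linarith) hAlaw hBlaw hAB _ hh₂]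

lemma ratio_eq (a b c e : ℝ) : (a / c) / (b / e) = e / c * (a / b) := by
  simp only [div_eq_mul_inv, mul_inv, inv_inv]
  ring

/-- Let `D ≥ 1` and `N ≥ 3` be integers and define
`Fish[D,N,x] = E[(F_{D,N} - x)₊]/E[F_{D,N}]` for `x ≥ 0`, where `F_{D,N} = (X/D)/(Y/N)` is
a Fisher random variable built from independent chi-squares `X ~ χ²(D)`, `Y ~ χ²(N)`
(a chi-square with `k` degrees of freedom being the Gamma distribution with shape `k/2`
and rate `1/2`).  Then for all `x ≥ 0`,
`Fish(D,N,x) = P(F_{D+2,N-2} ≥ ((N-2)·D·x)/((D+2)·N)) - x·((N-2)/N)·P(F_{D,N} ≥ x)`,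
where `F_{D+2,N-2} = (A/(D+2))/(B/(N-2))` for independent chi-squares `A ~ χ²(D+2)`,
`B ~ χ²(N-2)`. -/
theorem stmt_7
    {Ω : Type*} [MeasureSpace Ω] [IsProbabilityMeasure (ℙ : Measure Ω)]
    (D N : ℕ) (hD : 1 ≤ D) (hN : 3 ≤ N) (x : ℝ) (hx : 0 ≤ x)
    (X Y A B : Ω → ℝ)
    (hX : Measurable X) (hY : Measurable Y) (hA : Measurable A) (hB : Measurable B)
    (hXlaw : Measure.map X ℙ = gammaMeasure (D / 2) (1 / 2))
    (hYlaw : Measure.map Y ℙ = gammaMeasure (N / 2) (1 / 2))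
    (hAlaw : Measure.map A ℙ = gammaMeasure ((D + 2) / 2) (1 / 2))
    (hBlaw : Measure.map B ℙ = gammaMeasure ((N - 2 : ℕ) / 2) (1 / 2))
    (hXY : IndepFun X Y ℙ) (hAB : IndepFun A B ℙ)
    (F : Ω → ℝ) (hF : ∀ ω, F ω = (X ω / D) / (Y ω / N)) :
    (∫ ω, max (F ω - x) 0 ∂ℙ) / (∫ ω, F ω ∂ℙ) =
      (ℙ {ω | (A ω / (D + 2)) / (B ω / (N - 2 : ℕ)) ≥
          ((N : ℝ) - 2) * D * x / ((D + 2) * N)}).toReal -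
        x * (((N : ℝ) - 2) / N) * (ℙ {ω | F ω ≥ x}).toReal := by
  -- basic numerics
  have hD0 : (0:ℝ) < D := by exact_mod_cast Nat.lt_of_lt_of_le Nat.zero_lt_one hD
  have hN3 : (3:ℝ) ≤ N := by exact_mod_cast hN
  have hN0 : (0:ℝ) < N := by linarith
  have hN2 : (0:ℝ) < (N:ℝ) - 2 := by linarith
  have hDne : (D:ℝ) ≠ 0 := hD0.ne'
  have hNne : (N:ℝ) ≠ 0 := hN0.ne'
  have hN2ne : (N:ℝ) - 2 ≠ 0 := hN2.ne'
  have hc : ((N - 2 : ℕ) : ℝ) = (N:ℝ) - 2 := by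
    have h2 : 2 ≤ N := by omega
    push_cast [Nat.cast_sub h2]
    ring
  rw [hc] at hBlaw
  simp only [hc]
  -- F in ratio form
  have hFr : ∀ ω, F ω = (N:ℝ)/D * (X ω / Y ω) := by
    intro ω; rw [hF ω, ratio_eq]
  have hFmeas : Measurable F := by
    have : F = fun ω => (X ω / D) / (Y ω / N) := funext hF
    rw [this]
    exact (hX.div measurable_const).div (hY.div measurable_const)
  set t : ℝ := (D:ℝ) * x / N with ht
  have ht0 : 0 ≤ t := by positivity
  have hNDt : (N:ℝ)/D * t = x := by rw [ht]; field_simp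
  have hk : (0:ℝ) < (N:ℝ)/D := by positivity
  -- set identifications
  have hS2 : {ω | F ω ≥ x} = {ω | t ≤ X ω / Y ω} := by
    ext ω
    simp only [Set.mem_setOf_eq, ge_iff_le, hFr ω]
    rw [← hNDt]
    exact (mul_le_mul_iff_right₀ hk)
  have hS1 : {ω | (A ω / ((D:ℝ) + 2)) / (B ω / ((N:ℝ) - 2)) ≥
      ((N : ℝ) - 2) * D * x / ((D + 2) * N)} = {ω | t ≤ A ω / B ω} := by
    ext ω
    simp only [Set.mem_setOf_eq, ge_iff_le, ratio_eq]
    have hkey : ((N : ℝ) - 2) * D * x / ((D + 2) * N)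
        = ((N:ℝ) - 2) / ((D:ℝ) + 2) * t := by rw [ht]; field_simp
    rw [hkey]
    exact mul_le_mul_iff_right₀ (by positivity)
  -- the indicator function
  set g : ℝ → ENNReal := fun r => Set.indicator (Set.Ici t) (fun _ => 1) r with hgdef
  have hg : Measurable g := measurable_const.indicator measurableSet_Ici
  have hgiA : ∫⁻ ω, g (A ω / B ω) ∂ℙ = ℙ {ω | t ≤ A ω / B ω} := by
    have hset : MeasurableSet {ω | t ≤ A ω / B ω} :=
      measurableSet_le measurable_const (hA.div hB)
    rw [← lintegral_indicator_one hset]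
    exact lintegral_congr fun ω => by simp [hgdef, Set.indicator_apply]
  have hgiX : ∫⁻ ω, g (X ω / Y ω) ∂ℙ = ℙ {ω | t ≤ X ω / Y ω} := by
    have hset : MeasurableSet {ω | t ≤ X ω / Y ω} :=
      measurableSet_le measurable_const (hX.div hY)
    rw [← lintegral_indicator_one hset]
    exact lintegral_congr fun ω => by simp [hgdef, Set.indicator_apply]
  -- pointwise decomposition
  have hP : ∀ ω, ENNReal.ofReal (X ω / Y ω) * g (X ω / Y ω)
      = ENNReal.ofReal ((D:ℝ)/N * max (F ω - x) 0) + ENNReal.ofReal t * g (X ω / Y ω) := by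
    intro ω
    set r : ℝ := X ω / Y ω with hr
    by_cases hrt : t ≤ r
    · rw [hgdef]
      simp only [Set.indicator_of_mem (Set.mem_Ici.mpr hrt), mul_one]
      have h1 : 0 ≤ (N:ℝ)/D * r - x := by
        have h := mul_le_mul_of_nonneg_left hrt (le_of_lt hk)
        rw [hNDt] at h
        linarith
      have h2 : max (F ω - x) 0 = (N:ℝ)/D * r - x := by
        rw [hFr ω]; exact max_eq_left h1
      rw [h2]
      have h3 : (D:ℝ)/N * ((N:ℝ)/D * r - x) = r - t := by
        rw [ht]; field_simp
      rw [h3, ← ENNReal.ofReal_add (by linarith) ht0, sub_add_cancel]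
    · have h1 : (N:ℝ)/D * r - x ≤ 0 := by
        have hlt := (not_le.mp hrt).le
        have := mul_le_mul_of_nonneg_left hlt (le_of_lt hk)
        rw [hNDt] at this
        linarith
      have h2 : max (F ω - x) 0 = 0 := by
        rw [hFr ω]; exact max_eq_right h1
      simp [hgdef, Set.indicator_apply, hrt, h2]
  -- integrate the decomposition
  set M : ENNReal := ∫⁻ ω, ENNReal.ofReal (max (F ω - x) 0) ∂ℙ with hM
  have hmax_meas : Measurable (fun ω => max (F ω - x) 0) :=
    (hFmeas.sub measurable_const).max measurable_const
  have hEQN : ENNReal.ofReal ((D:ℝ)/N) * M + ENNReal.ofReal t * ℙ {ω | t ≤ X ω / Y ω}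
      = ENNReal.ofReal ((D:ℝ)/((N:ℝ)-2)) * ℙ {ω | t ≤ A ω / B ω} := by
    have hcore := CORE (D:ℝ) (N:ℝ) hD0 (by linarith) X Y A B hX hY hA hB
      hXlaw hYlaw hAlaw hBlaw hXY hAB g hg
    rw [hgiA] at hcore
    rw [← hcore]
    have : ∀ ω, ENNReal.ofReal (X ω / Y ω) * g (X ω / Y ω)
        = ENNReal.ofReal ((D:ℝ)/N) * ENNReal.ofReal (max (F ω - x) 0)
          + ENNReal.ofReal t * g (X ω / Y ω) := by
      intro ω
      rw [hP ω, ENNReal.ofReal_mul (by positivity)]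
    have hg1 : Measurable (fun ω => g (X ω / Y ω)) := by exact hg.comp (hX.div hY)
    have hg2 : Measurable (fun ω => ENNReal.ofReal t * g (X ω / Y ω)) := by
      exact hg1.const_mul _
    rw [lintegral_congr this, lintegral_add_right _ hg2,
      lintegral_const_mul _ hmax_meas.ennreal_ofReal,
      lintegral_const_mul _ hg1, hgiX]
  -- a.e. nonnegativity
  have hae_nonneg : ∀ (Z : Ω → ℝ) (a : ℝ), Measurable Z →
      Measure.map Z ℙ = gammaMeasure a (1/2) → ∀ᵐ ω ∂ℙ, 0 ≤ Z ω := by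
    intro Z a hZ hZlaw
    rw [ae_iff]
    have hpre : {ω | ¬ 0 ≤ Z ω} = Z ⁻¹' (Set.Iio 0) := by ext ω; simp [not_le]
    rw [hpre, ← Measure.map_apply hZ measurableSet_Iio, hZlaw, gammaMeasure,
      withDensity_apply _ measurableSet_Iio]
    exact lintegral_gammaPDF_of_nonpos le_rfl
  have hXae := hae_nonneg X _ hX hXlaw
  have hYae := hae_nonneg Y _ hY hYlaw
  have hFae : ∀ᵐ ω ∂ℙ, 0 ≤ F ω := by
    filter_upwards [hXae, hYae] with ω h1 h2
    rw [hF ω]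
    exact div_nonneg (div_nonneg h1 (Nat.cast_nonneg D)) (div_nonneg h2 (Nat.cast_nonneg N))
  -- denominator
  have hdenlin : ∫⁻ ω, ENNReal.ofReal (X ω / Y ω) ∂ℙ = ENNReal.ofReal ((D:ℝ)/((N:ℝ)-2)) := by
    have hcore1 := CORE (D:ℝ) (N:ℝ) hD0 (by linarith) X Y A B hX hY hA hB
      hXlaw hYlaw hAlaw hBlaw hXY hAB (fun _ => 1) measurable_const
    simpa [lintegral_one, measure_univ, mul_one] using hcore1
  have hden : ∫ ω, F ω ∂ℙ = (N:ℝ)/((N:ℝ)-2) := by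
    rw [integral_eq_lintegral_of_nonneg_ae hFae hFmeas.aestronglyMeasurable]
    have heq : ∀ ω, ENNReal.ofReal (F ω)
        = ENNReal.ofReal ((N:ℝ)/D) * ENNReal.ofReal (X ω / Y ω) := fun ω => by
      rw [hFr ω, ENNReal.ofReal_mul hk.le]
    rw [lintegral_congr heq, lintegral_const_mul _ (by exact (hX.div hY).ennreal_ofReal),
      hdenlin, ← ENNReal.ofReal_mul hk.le,
      ENNReal.toReal_ofReal (by positivity)]
    field_simp
  -- numerator
  have hnum : ∫ ω, max (F ω - x) 0 ∂ℙ = M.toReal := by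
    rw [integral_eq_lintegral_of_nonneg_ae (ae_of_all _ fun ω => le_max_right (F ω - x) 0)
      hmax_meas.aestronglyMeasurable, hM]
  -- finiteness
  have hP1top : ℙ {ω | t ≤ A ω / B ω} ≠ ⊤ := measure_ne_top _ _
  have hP2top : ℙ {ω | t ≤ X ω / Y ω} ≠ ⊤ := measure_ne_top _ _
  have hRHSfin : ENNReal.ofReal ((D:ℝ)/((N:ℝ)-2)) * ℙ {ω | t ≤ A ω / B ω} ≠ ⊤ :=
    ENNReal.mul_ne_top ENNReal.ofReal_ne_top hP1top
  have hterm1fin : ENNReal.ofReal ((D:ℝ)/N) * M ≠ ⊤ := by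
    intro h
    apply hRHSfin
    rw [← hEQN]
    exact ENNReal.add_eq_top.mpr (Or.inl h)
  have hMfin : M ≠ ⊤ := by
    intro h
    apply hterm1fin
    rw [h]
    exact ENNReal.mul_top (ENNReal.ofReal_pos.mpr (div_pos hD0 hN0)).ne'
  have hterm2fin : ENNReal.ofReal t * ℙ {ω | t ≤ X ω / Y ω} ≠ ⊤ :=
    ENNReal.mul_ne_top ENNReal.ofReal_ne_top hP2top
  -- real equation
  have hEQNr : (D:ℝ)/N * M.toReal + t * (ℙ {ω | t ≤ X ω / Y ω}).toReal
      = (D:ℝ)/((N:ℝ)-2) * (ℙ {ω | t ≤ A ω / B ω}).toReal := by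
    have h := congrArg ENNReal.toReal hEQN
    rwa [ENNReal.toReal_add (ENNReal.mul_ne_top ENNReal.ofReal_ne_top hMfin) hterm2fin,
      ENNReal.toReal_mul, ENNReal.toReal_mul, ENNReal.toReal_mul,
      ENNReal.toReal_ofReal (by positivity), ENNReal.toReal_ofReal ht0,
      ENNReal.toReal_ofReal (le_of_lt (div_pos hD0 hN2))] at h
  -- conclusion
  rw [hnum, hden, hS1, hS2]
  set P1 : ℝ := (ℙ {ω | t ≤ A ω / B ω}).toReal with hP1
  set P2 : ℝ := (ℙ {ω | t ≤ X ω / Y ω}).toReal with hP2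
  rw [div_eq_iff (div_pos hN0 hN2).ne']
  have h5 : (D:ℝ)/N * M.toReal = (D:ℝ)/((N:ℝ)-2) * P1 - t * P2 := by linarith
  have h7 : M.toReal = (N:ℝ)/D * ((D:ℝ)/((N:ℝ)-2) * P1 - t * P2) := by
    rw [← h5]
    field_simp
  rw [h7, ht]
  field_simp
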